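/- Key lemma for BBF (Lemma: bounded-space best-fit dominance): Let b = (B_{-(k-1)},...,B_0) be k initially open bins possibly containing items, and let P = (B_1,...,B_x) be a valid packing of a set S into x unit bins. If the items of S are presented to the Bounded Best-Fit algorithm with k open bins in the order B_1, B_2, ..., B_x (items of B_1 first, etc.), then each item of bin B_i in P is placed by BBF into a bin with index at most i; in particular BBF uses at most k + x bins in total. -/

import Mathlib

open Classical in
/-- Index (in the list of open-bin loads) of the fullest open bin with room
for an item of size `s`, if any: Best Fit choice. -/
noncomputable def bestFitIdx (s : ℝ) (bins : List ℝ) : Option ℕ :=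
  (((bins.zipIdx.map Prod.swap).filter (fun p => p.2 + s ≤ 1)).argmax (fun p => p.2)).map (fun p => p.1)

open Classical in
/-- Index of the fullest open bin (the one Best Fit closes when no bin has room). -/
noncomputable def fullestIdx (bins : List ℝ) : ℕ :=
  (((bins.zipIdx.map Prod.swap).argmax (fun p => p.2)).map (fun p => p.1)).getD 0

open Classical in
/-- One step of Bounded Best-Fit.  The state is the list of loads of the open
bins together with the number of bins closed so far.  An arriving item of size
`s` is placed in the fullest open bin with room for it; if there is none, the
fullest open bin is closed (never to be reopened) and replaced by a new empty
bin receiving the item. -/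
noncomputable def bbfStep (st : List ℝ × ℕ) (s : ℝ) : List ℝ × ℕ :=
  match bestFitIdx s st.1 with
  | some i => (st.1.set i (st.1.getD i 0 + s), st.2)
  | none => (st.1.set (fullestIdx st.1) s, st.2 + 1)

lemma mem_swapIdx_iff {l : List ℝ} {x : ℕ × ℝ} :
    x ∈ l.zipIdx.map Prod.swap ↔ l[x.1]? = some x.2 := by
  rw [List.mem_map]; constructor
  · rintro ⟨y, hy, rfl⟩; exact List.mem_zipIdx_iff_getElem?.mp hy
  · intro h; exact ⟨x.swap, List.mem_zipIdx_iff_getElem?.mpr h, Prod.swap_swap x⟩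

lemma mem_enum_of_lt {l : List ℝ} {i : ℕ} (h : i < l.length) :
    (i, l[i]) ∈ l.zipIdx.map Prod.swap := by
  rw [mem_swapIdx_iff]
  simp [List.getElem?_eq_getElem h]

lemma bestFitIdx_isSome {s : ℝ} {bins : List ℝ} {j : ℕ} (hj : j < bins.length)
    (h : bins[j] + s ≤ 1) : ∃ i, bestFitIdx s bins = some i := by
  have hmem : (j, bins[j]) ∈ (bins.zipIdx.map Prod.swap).filter (fun p => decide (p.2 + s ≤ 1)) := by
    rw [List.mem_filter]
    exact ⟨mem_enum_of_lt hj, by simpa using h⟩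
  by_contra hc
  push_neg at hc
  have hn := Option.eq_none_iff_forall_not_mem.mpr
    (fun i (hi : i ∈ _) => hc i hi)
  unfold bestFitIdx at hn
  rw [Option.map_eq_none_iff, List.argmax_eq_none] at hn
  rw [hn] at hmem
  exact List.not_mem_nil hmem

lemma getD_lt (l : List ℝ) {i : ℕ} (h : i < l.length) : l.getD i 0 = l[i] := by
  rw [List.getD_eq_getElem?_getD, List.getElem?_eq_getElem h]; rfl

lemma bestFitIdx_le_one {s : ℝ} {bins : List ℝ} {i : ℕ}
    (h : bestFitIdx s bins = some i) : bins.getD i 0 + s ≤ 1 := by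
  unfold bestFitIdx at h
  rw [Option.map_eq_some_iff] at h
  obtain ⟨p, hp, hp1⟩ := h
  have hmem := List.argmax_mem hp
  rw [List.mem_filter] at hmem
  have h2 := mem_swapIdx_iff.mp hmem.1
  have := of_decide_eq_true hmem.2
  rw [List.getD_eq_getElem?_getD, ← hp1, h2]
  simpa using this

lemma fullestIdx_lt {bins : List ℝ} (h : bins ≠ []) :
    fullestIdx bins < bins.length := by
  unfold fullestIdx
  have hne : (bins.zipIdx.map Prod.swap).argmax (fun p => p.2) ≠ none := by
    rw [Ne, List.argmax_eq_none]
    simpa using h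
  rcases Option.ne_none_iff_exists'.mp hne with ⟨p, hp⟩
  have hmem := List.argmax_mem (show p ∈ (bins.zipIdx.map Prod.swap).argmax (fun p => p.2) from hp)
  have h2 := mem_swapIdx_iff.mp hmem
  have : p.1 < bins.length := by
    by_contra hc
    rw [List.getElem?_eq_none (le_of_not_gt hc)] at h2
    cases h2
  simpa [hp] using this

lemma bbf_length (L : List ℝ) (bins : List ℝ) (n : ℕ) :
    (L.foldl bbfStep (bins, n)).1.length = bins.length := by
  induction L generalizing bins n with
  | nil => rfl
  | cons s t ih =>
    simp only [List.foldl_cons]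
    rcases h : bestFitIdx s bins with _ | i <;>
      simp only [bbfStep, h] <;> rw [ih] <;> simp

/-- once some open bin can hold all remaining items, no further closes happen -/
lemma bbf_no_close (L : List ℝ) (hpos : ∀ s ∈ L, 0 < s) :
    ∀ (bins : List ℝ) (j : ℕ), j < bins.length →
      bins.getD j 0 + L.sum ≤ 1 → ∀ n, (L.foldl bbfStep (bins, n)).2 = n := by
  induction L with
  | nil => intro bins j hj hsum n; rfl
  | cons s t ih =>
    intro bins j hj hsum n
    have hs : 0 < s := hpos s (by simp)
    have ht : 0 ≤ t.sum := List.sum_nonneg (fun x hx => le_of_lt (hpos x (by simp [hx])))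
    have hj' : bins.getD j 0 + s ≤ 1 := by
      rw [List.sum_cons] at hsum; linarith
    have hj'' : bins[j] + s ≤ 1 := by rwa [getD_lt _ hj] at hj'
    rcases bestFitIdx_isSome hj hj'' with ⟨i, hi⟩
    simp only [List.foldl_cons, bbfStep, hi]
    set bins' := bins.set i (bins.getD i 0 + s) with hbins'
    have hjl : j < bins'.length := by simpa [hbins'] using hj
    apply ih (fun x hx => hpos x (by simp [hx])) bins' j hjl _ n
    rw [List.sum_cons] at hsum
    rcases eq_or_ne i j with rfl | hne
    · have : bins'.getD i 0 = bins.getD i 0 + s := by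
        rw [getD_lt _ hjl]; exact List.getElem_set_self _
      rw [this]; linarith
    · have : bins'.getD j 0 = bins.getD j 0 := by
        rw [getD_lt _ hjl, getD_lt _ hj]; exact List.getElem_set_ne hne _
      rw [this]; linarith

/-- processing one packed bin's items causes at most one close -/
lemma bbf_one_bin (L : List ℝ) (hsum : L.sum ≤ 1) (hpos : ∀ s ∈ L, 0 < s) :
    ∀ (bins : List ℝ), bins ≠ [] → ∀ n,
      (L.foldl bbfStep (bins, n)).2 ≤ n + 1 := by
  induction L with
  | nil => intro bins _ n; simp
  | cons s t ih =>
    intro bins hb n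
    rcases h : bestFitIdx s bins with _ | i
    · -- close: new empty bin opened with item s
      simp only [List.foldl_cons, bbfStep, h]
      set j := fullestIdx bins with hjdef
      have hjl : j < bins.length := fullestIdx_lt hb
      set bins' := bins.set j s with hbins'
      have hjl' : j < bins'.length := by simpa [hbins'] using hjl
      have hget : bins'.getD j 0 = s := by
        rw [getD_lt _ hjl']; exact List.getElem_set_self _
      have := bbf_no_close t (fun x hx => hpos x (by simp [hx])) bins' j hjl'
        (by rw [hget]; simpa [List.sum_cons] using hsum) (n + 1)
      rw [this]
    · simp only [List.foldl_cons, bbfStep, h]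
      have hs : 0 < s := hpos s (by simp)
      have : t.sum ≤ 1 := by
        rw [List.sum_cons] at hsum; linarith
      apply ih this (fun x hx => hpos x (by simp [hx]))
      simp [← List.length_pos_iff]
      rwa [← List.length_pos_iff] at hb

lemma bbf_main (P : List (List ℝ)) :
    ∀ (bins : List ℝ), bins ≠ [] →
      (∀ B ∈ P, B.sum ≤ 1 ∧ ∀ s ∈ B, 0 < s) → ∀ n,
      (P.flatten.foldl bbfStep (bins, n)).2 ≤ n + P.length := by
  induction P with
  | nil => intro bins _ _ n; simp
  | cons B P' ih =>
    intro bins hb hP n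
    rw [List.flatten_cons, List.foldl_append]
    set st := B.foldl bbfStep (bins, n) with hst
    have h1 : st.2 ≤ n + 1 :=
      bbf_one_bin B (hP B (by simp)).1 (hP B (by simp)).2 bins hb n
    have hlen : st.1.length = bins.length := bbf_length B bins n
    have hne : st.1 ≠ [] := by
      rw [← List.length_pos_iff, hlen, List.length_pos_iff]; exact hb
    have h2 := ih st.1 hne (fun B hB => hP B (by simp [hB])) st.2
    calc (P'.flatten.foldl bbfStep (st.1, st.2)).2 ≤ st.2 + P'.length := h2
      _ ≤ n + 1 + P'.length := by omega
      _ = n + (B :: P').length := by simp; omega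

/-- BBF dominance lemma: starting from `k` open bins `init` (possibly already
containing items), if the items of a set `S` are presented to Bounded Best-Fit
in the order in which they appear in a valid packing `P = (B₁,…,B_x)` of `S`
into unit bins, then BBF closes at most `x` bins, hence uses at most `k + x`
bins in total. -/
theorem bbf_bounded_by_packing (k : ℕ) (hk : 0 < k) (init : List ℝ)
    (hlen : init.length = k) (hinit : ∀ l ∈ init, 0 ≤ l ∧ l ≤ 1)
    (P : List (List ℝ))
    (hP : ∀ B ∈ P, B.sum ≤ 1 ∧ ∀ s ∈ B, 0 < s) :
    k + (P.flatten.foldl bbfStep (init, 0)).2 ≤ k + P.length := by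
  have h := bbf_main P init (by rw [← List.length_pos_iff, hlen]; exact hk) hP 0
  omega
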